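/- For all natural numbers N ≥ 2 and all natural numbers m, q with 0 ≤ m ≤ N − 2 and 0 ≤ q ≤ N − 2, the Shmaliy polynomials are orthogonal with respect to the weight ρ(n,N) = 2n/(N(N−1)): one has ∑_{n=0}^{N−1} (2n/(N(N−1))) h_m(n,N) h_q(n,N) = δ_{mq} · (m+1)Γ(N−1)Γ(N)/(Γ(N−m−1) · N · Γ(N+m+1)), where δ_{mq} is the Kronecker delta. -/

import Mathlib

/-- The Pochhammer symbol `(a)_k = a (a+1) ⋯ (a+k-1)` over ℝ. -/
noncomputable def poch (a : ℝ) (k : ℕ) : ℝ := (ascPochhammer ℝ k).eval a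

/-- The Shmaliy polynomial `h_m(n,N)`. -/
noncomputable def shmaliy (m n N : ℕ) : ℝ :=
  (((m : ℝ) + 1) ^ 2 / N) *
    ∑ k ∈ Finset.range (m + 1),
      (poch (-(m : ℝ)) k * poch ((n : ℝ) + 1) k * poch ((m : ℝ) + 2) k) /
        (poch 2 k * poch ((N : ℝ) + 1) k * (k.factorial : ℝ))


lemma poch_zero (a : ℝ) : poch a 0 = 1 := by simp [poch]
lemma poch_succ (a : ℝ) (k : ℕ) : poch a (k+1) = poch a k * (a + k) := by
  simpa [poch] using ascPochhammer_succ_eval k a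
lemma poch_succ_left (a : ℝ) (k : ℕ) : poch a (k+1) = a * poch (a+1) k := by
  simp [poch, ascPochhammer_succ_left, Polynomial.eval_comp]
lemma poch_pos {a : ℝ} (ha : 0 < a) (k : ℕ) : 0 < poch a k := ascPochhammer_pos k a ha
lemma poch_neg_nat {r k : ℕ} (h : r < k) : poch (-(r : ℝ)) k = 0 := by
  obtain ⟨t, rfl⟩ : ∃ t, k = r + 1 + t := ⟨k - (r+1), by omega⟩
  induction t with
  | zero => rw [poch_succ]; simp
  | succ t ih =>
      rw [show r + 1 + (t+1) = (r + 1 + t) + 1 by ring, poch_succ, ih (by omega)]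
      ring

/-- The coefficient of `poch (n+1) k` in `shmaliy` (without the `(m+1)^2/N` prefactor). -/
noncomputable def Dk (N m k : ℕ) : ℝ :=
  poch (-(m : ℝ)) k * poch ((m : ℝ) + 2) k / (poch 2 k * poch ((N : ℝ) + 1) k * (k.factorial : ℝ))

lemma Dk_zero (N m : ℕ) : Dk N m 0 = 1 := by simp [Dk, poch_zero]

lemma Dk_vanish (N : ℕ) {m k : ℕ} (h : m < k) : Dk N m k = 0 := by
  simp [Dk, poch_neg_nat h]

lemma shmaliy_eq (m n N s : ℕ) (hs : m ≤ s) :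
    shmaliy m n N = (((m : ℝ) + 1) ^ 2 / N) *
      ∑ k ∈ Finset.range (s + 1), Dk N m k * poch ((n : ℝ) + 1) k := by
  rw [shmaliy]
  congr 1
  rw [← Finset.sum_subset (Finset.range_subset_range.2 (by omega : m + 1 ≤ s + 1))
    (fun k _ hk => by rw [Dk_vanish N (by simp at hk ⊢; omega), zero_mul])]
  exact Finset.sum_congr rfl fun k _ => by rw [Dk]; ring


lemma poch_nat_cast (a k : ℕ) : poch (a : ℝ) k = ((a.ascFactorial k : ℕ) : ℝ) := by
  rw [poch, ← ascPochhammer_nat_eq_ascFactorial, ascPochhammer_eval_cast]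

lemma sum_choose_hockey (N k : ℕ) :
    ∑ n ∈ Finset.range N, (n+k).choose (k+1) = (N+k).choose (k+2) := by
  induction N with
  | zero => simp [Nat.choose_eq_zero_of_lt (by omega : k < k+2)]
  | succ N ih =>
      rw [Finset.sum_range_succ, ih, show N+1+k = (N+k)+1 by ring,
        Nat.choose_succ_succ' (N+k) (k+1), show k+1+1 = k+2 from rfl]
      omega

lemma weighted_poch_sum (N k : ℕ) :
    ∑ n ∈ Finset.range N, (n:ℝ) * poch ((n:ℝ)+1) k
      = (((k+1).factorial * (N+k).choose (k+2) : ℕ) : ℝ) := by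
  have hterm : ∀ n : ℕ, (n:ℝ) * poch ((n:ℝ)+1) k = ((n.ascFactorial (k+1) : ℕ) : ℝ) := by
    intro n
    have h1 : ((n:ℝ)+1) = ((n+1 : ℕ):ℝ) := by push_cast; ring
    rw [h1, poch_nat_cast, ← Nat.cast_mul]
    congr 1
    rw [Nat.ascFactorial_succ, ← Nat.succ_ascFactorial]
  simp only [hterm]
  have h2 : ∀ n : ℕ, n.ascFactorial (k+1) = (k+1).factorial * (n+k).choose (k+1) := by
    intro n
    rw [Nat.ascFactorial_eq_factorial_mul_choose']
    congr 2
  have h4 : ∑ n ∈ Finset.range N, n.ascFactorial (k+1)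
      = (k+1).factorial * (N+k).choose (k+2) := by
    simp only [h2, ← Finset.mul_sum, sum_choose_hockey]
  rw [← Nat.cast_sum, h4]

lemma alt_inner (q r : ℕ) (hr : r < q) :
    ∑ k ∈ Finset.range (q+1), (-1:ℝ)^k * ((q.choose k * k.choose r : ℕ):ℝ) = 0 := by
  rw [Finset.range_eq_Ico, ← Finset.sum_subset (Finset.Ico_subset_Ico (Nat.zero_le r) le_rfl :
        Finset.Ico r (q+1) ⊆ Finset.Ico 0 (q+1))]
  · rw [Finset.sum_Ico_eq_sum_range]
    have hq1r : q + 1 - r = (q-r) + 1 := by omega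
    rw [hq1r]
    have hterm : ∀ i ∈ Finset.range ((q-r)+1),
        (-1:ℝ)^(r+i) * ((q.choose (r+i) * (r+i).choose r : ℕ):ℝ)
          = ((-1:ℝ)^r * (q.choose r : ℕ)) * ((-1:ℝ)^i * ((q-r).choose i : ℕ)) := by
      intro i hi
      simp only [Finset.mem_range] at hi
      have h3 : q.choose (r+i) * (r+i).choose r = q.choose r * (q-r).choose i := by
        have := Nat.choose_mul (n := q) (k := r+i) (show r ≤ r+i by omega)
        rwa [show r+i-r = i by omega] at this
      rw [h3, pow_add]
      push_cast
      ring
    rw [Finset.sum_congr rfl hterm, ← Finset.mul_sum]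
    have hz : ∑ i ∈ Finset.range ((q-r)+1), (-1:ℝ)^i * (((q-r).choose i : ℕ):ℝ) = 0 := by
      have := Int.alternating_sum_range_choose_of_ne (show q - r ≠ 0 by omega)
      exact_mod_cast congrArg (fun z : ℤ => (z : ℝ)) this
    rw [hz, mul_zero]
  · intro k hk hnk
    simp only [Finset.mem_Ico, Finset.mem_range, Nat.zero_le, true_and] at hk hnk
    have : k < r := by omega
    rw [Nat.choose_eq_zero_of_lt this, Nat.mul_zero]
    simp

lemma alt_outer (q : ℕ) (hq : 1 ≤ q) :
    ∑ k ∈ Finset.range (q+1),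
      (-1:ℝ)^k * ((q.choose k * (q+1+k).choose (k+2) : ℕ):ℝ) = 0 := by
  have hsymm : ∀ k : ℕ, (q+1+k).choose (k+2) = (q+1+k).choose (q-1) := by
    intro k
    have h := Nat.choose_symm (show k+2 ≤ q+1+k by omega)
    rw [show q+1+k-(k+2) = q-1 by omega] at h
    exact h.symm
  have hvdm : ∀ k : ℕ, (q+1+k).choose (q-1)
      = ∑ ij ∈ Finset.HasAntidiagonal.antidiagonal (q-1), (q+1).choose ij.1 * k.choose ij.2 :=
    fun k => Nat.add_choose_eq (q+1) k (q-1)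
  calc ∑ k ∈ Finset.range (q+1), (-1:ℝ)^k * ((q.choose k * (q+1+k).choose (k+2) : ℕ):ℝ)
      = ∑ k ∈ Finset.range (q+1), ∑ ij ∈ Finset.HasAntidiagonal.antidiagonal (q-1),
          ((q+1).choose ij.1 : ℝ) * ((-1:ℝ)^k * ((q.choose k * k.choose ij.2 : ℕ):ℝ)) := by
        refine Finset.sum_congr rfl fun k _ => ?_
        rw [hsymm k, hvdm k]
        push_cast
        rw [Finset.mul_sum, Finset.mul_sum]
        exact Finset.sum_congr rfl fun ij _ => by push_cast; ring
    _ = ∑ ij ∈ Finset.HasAntidiagonal.antidiagonal (q-1),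
          ((q+1).choose ij.1 : ℝ) * (∑ k ∈ Finset.range (q+1),
            (-1:ℝ)^k * ((q.choose k * k.choose ij.2 : ℕ):ℝ)) := by
        rw [Finset.sum_comm]
        exact Finset.sum_congr rfl fun ij _ => by rw [Finset.mul_sum]
    _ = 0 := by
        refine Finset.sum_eq_zero fun ij hij => ?_
        rw [alt_inner q ij.2 ?_, mul_zero]
        rw [Finset.HasAntidiagonal.mem_antidiagonal] at hij
        omega

lemma poch_cast_fact (a k : ℕ) : poch ((a : ℝ) + 1) k = ((a+k).factorial : ℝ) / (a.factorial : ℝ) := by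
  have h1 : ((a : ℝ) + 1) = ((a + 1 : ℕ) : ℝ) := by push_cast; ring
  rw [h1, poch_nat_cast, eq_div_iff (by exact_mod_cast a.factorial_ne_zero)]
  have h3 := Nat.factorial_mul_ascFactorial a k
  rw [mul_comm]; exact_mod_cast congrArg (Nat.cast (R := ℝ)) h3

lemma poch_two_eq (k : ℕ) : poch 2 k = ((k+1).factorial : ℝ) := by
  rw [show (2:ℝ) = ((1:ℕ):ℝ)+1 by norm_num, poch_cast_fact, Nat.add_comm 1 k]
  norm_num

lemma poch_neg_fact {q k : ℕ} (h : k ≤ q) :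
    poch (-(q : ℝ)) k = (-1)^k * ((q.factorial : ℝ) / ((q-k).factorial : ℝ)) := by
  induction k with
  | zero =>
      simp [poch, div_self (show ((q.factorial:ℝ)) ≠ 0 from by exact_mod_cast q.factorial_ne_zero)]
  | succ k ih =>
      rw [poch_succ, ih (by omega)]
      have hk : k ≤ q := by omega
      have h2 : ((q - k : ℕ) : ℝ) = (q : ℝ) - k := by
        push_cast [Nat.cast_sub hk]; ring
      have h3 : q - k = (q - (k+1)) + 1 := by omega
      have h4 : ((q-k).factorial : ℝ) = ((q-k:ℕ):ℝ) * ((q-(k+1)).factorial : ℝ) := by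
        rw [h3]; exact_mod_cast congrArg (Nat.cast (R := ℝ)) (Nat.factorial_succ _)
      have h5 : ((q-(k+1)).factorial : ℝ) ≠ 0 := by exact_mod_cast (q-(k+1)).factorial_ne_zero
      have h7 : (k:ℝ) < (q:ℝ) := by exact_mod_cast h
      have h6 : (q:ℝ) - (k:ℝ) ≠ 0 := by linarith
      rw [h4, h2]
      field_simp
      ring

lemma choose_cast {r n : ℕ} (h : r ≤ n) :
    ((n.choose r : ℕ) : ℝ) = (n.factorial : ℝ) / ((r.factorial : ℝ) * ((n-r).factorial : ℝ)) := by
  have hx : ((r.factorial : ℝ) * ((n-r).factorial : ℝ)) ≠ 0 := by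
    have h1 : (r.factorial : ℝ) ≠ 0 := by exact_mod_cast r.factorial_ne_zero
    have h2 : (((n-r).factorial : ℕ) : ℝ) ≠ 0 := by exact_mod_cast (n-r).factorial_ne_zero
    exact mul_ne_zero h1 h2
  rw [eq_div_iff hx, ← mul_assoc]
  exact_mod_cast congrArg (Nat.cast (R := ℝ)) (Nat.choose_mul_factorial_mul_factorial h)



lemma inner_sum_zero (N q : ℕ) (hN : 2 ≤ N) (hq : 1 ≤ q) :
    ∑ k ∈ Finset.range (q+1),
      Dk N q k * (((k+1).factorial * (N+k).choose (k+2) : ℕ) : ℝ) = 0 := by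
  obtain ⟨M, rfl⟩ : ∃ M, N = M+2 := ⟨N-2, by omega⟩
  obtain ⟨Q, rfl⟩ : ∃ Q, q = Q+1 := ⟨q-1, by omega⟩
  have hterm : ∀ k ∈ Finset.range (Q+2),
      Dk (M+2) (Q+1) k * (((k+1).factorial * (M+2+k).choose (k+2) : ℕ) : ℝ)
        = (((M:ℝ)+2)*((M:ℝ)+1)*((Q.factorial : ℝ))/(((Q+2).factorial : ℝ)))
            * ((-1:ℝ)^k * (((Q+1).choose k * (Q+1+1+k).choose (k+2) : ℕ):ℝ)) := by
    intro k hk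
    simp only [Finset.mem_range] at hk
    have hkq : k ≤ Q+1 := by omega
    rw [Dk]
    rw [show (((Q+1:ℕ):ℝ)) = ((Q:ℝ)+1) by push_cast; ring]  -- normalize casts
    rw [show (-((Q:ℝ)+1)) = -(((Q+1:ℕ)):ℝ) by push_cast; ring, poch_neg_fact hkq]
    rw [show ((Q:ℝ)+1+2) = (((Q+2:ℕ)):ℝ)+1 by push_cast; ring, poch_cast_fact (Q+2) k]
    rw [poch_two_eq]
    rw [show (((M+2:ℕ)):ℝ)+1 = (((M+2:ℕ)):ℝ)+1 from rfl]
    rw [show ((((M+2:ℕ)):ℝ)) = ((M:ℝ)+2) by push_cast; ring]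
    rw [show ((M:ℝ)+2+1) = (((M+2:ℕ)):ℝ)+1 by push_cast; ring, poch_cast_fact (M+2) k]
    -- choose casts
    have hc1 : (((M+2+k).choose (k+2) : ℕ) : ℝ)
        = ((M+2+k).factorial : ℝ) / (((k+2).factorial : ℝ) * ((M).factorial : ℝ)) := by
      have := choose_cast (show k+2 ≤ M+2+k by omega)
      rwa [show M+2+k-(k+2) = M by omega] at this
    have hc2 : (((Q+1+1+k).choose (k+2) : ℕ) : ℝ)
        = ((Q+2+k).factorial : ℝ) / (((k+2).factorial : ℝ) * ((Q).factorial : ℝ)) := by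
      have := choose_cast (show k+2 ≤ Q+1+1+k by omega)
      rw [show Q+1+1+k-(k+2) = Q by omega] at this
      rwa [show Q+1+1+k = Q+2+k by ring] at this
    have hc3 : (((Q+1).choose k : ℕ) : ℝ)
        = ((Q+1).factorial : ℝ) / ((k.factorial : ℝ) * ((Q+1-k).factorial : ℝ)) :=
      choose_cast hkq
    push_cast [hc1, hc2, hc3]
    -- factorial expansions
    have f1 : (((M+2).factorial : ℕ) : ℝ) = ((M:ℝ)+2)*((M:ℝ)+1)*(M.factorial : ℝ) := by
      rw [show M+2 = (M+1)+1 from rfl, Nat.factorial_succ, Nat.factorial_succ]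
      push_cast; ring
    have f2 : (((Q+2).factorial : ℕ) : ℝ) = ((Q:ℝ)+2)*((Q:ℝ)+1)*(Q.factorial : ℝ) := by
      rw [show Q+2 = (Q+1)+1 from rfl, Nat.factorial_succ, Nat.factorial_succ]
      push_cast; ring
    have f3 : (((Q+1).factorial : ℕ) : ℝ) = ((Q:ℝ)+1)*(Q.factorial : ℝ) := by
      rw [Nat.factorial_succ]; push_cast; ring
    rw [f1, f2, f3]
    have nz : ∀ j : ℕ, ((j.factorial : ℕ) : ℝ) ≠ 0 := fun j => by exact_mod_cast j.factorial_ne_zero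
    have nzq : ((Q:ℝ)+1) ≠ 0 := by positivity
    have nzq2 : ((Q:ℝ)+2) ≠ 0 := by positivity
    have nzm1 : ((M:ℝ)+1) ≠ 0 := by positivity
    have nzm2 : ((M:ℝ)+2) ≠ 0 := by positivity
    field_simp
  rw [Finset.sum_congr rfl hterm, ← Finset.mul_sum, alt_outer (Q+1) (by omega), mul_zero]


noncomputable def Ah (N m : ℕ) : ℝ := -(((m:ℝ)+1) * ((N:ℝ)+(m:ℝ)+1)) / (2*(2*(m:ℝ)+3))
noncomputable def Bh (N m : ℕ) : ℝ :=
  ((m:ℝ)+1)*((N:ℝ)+(m:ℝ)+1)/(2*(2*(m:ℝ)+3)) + ((m:ℝ)+1)*((N:ℝ)-(m:ℝ)-1)/(2*(2*(m:ℝ)+1))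
noncomputable def Ch (N m : ℕ) : ℝ :=
  if m = 0 then 0 else -(((m:ℝ)+1) * ((N:ℝ)-(m:ℝ)-1)) / (2*(2*(m:ℝ)+1))

set_option maxHeartbeats 2000000 in
lemma coeff_rec (N t j : ℕ) (hN : 2 ≤ N) :
    (((t:ℝ)+2)^2/N) * (Dk N (t+1) j - ((j:ℝ)+2) * Dk N (t+1) (j+1)) =
      Ah N (t+1) * ((((t:ℝ)+3)^2/N) * Dk N (t+2) (j+1))
      + Bh N (t+1) * ((((t:ℝ)+2)^2/N) * Dk N (t+1) (j+1))
      + Ch N (t+1) * ((((t:ℝ)+1)^2/N) * Dk N t (j+1)) := by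
  have c1 : ((t+1:ℕ):ℝ) = (t:ℝ)+1 := by push_cast; ring
  have c2 : ((t+2:ℕ):ℝ) = (t:ℝ)+2 := by push_cast; ring
  simp only [Dk, Ah, Bh, Ch, c1, c2, if_neg (Nat.succ_ne_zero t)]
  set A := poch (-((t:ℝ)+1)) j with hA
  set B := poch ((t:ℝ)+1+2) j with hB
  have e1 : poch (-((t:ℝ)+1)) (j+1) = A * ((j:ℝ) - (t:ℝ) - 1) := by
    rw [poch_succ]; ring
  have e2 : poch ((t:ℝ)+1+2) (j+1) = B * ((t:ℝ)+3+(j:ℝ)) := by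
    rw [poch_succ]; ring
  have e3 : poch (-((t:ℝ)+2)) (j+1) = -((t:ℝ)+2) * A := by
    rw [poch_succ_left, show (-((t:ℝ)+2)+1) = -((t:ℝ)+1) by ring]
  have e4' : poch ((t:ℝ)+1+2) (j+2) = B * ((t:ℝ)+3+(j:ℝ)) * ((t:ℝ)+4+(j:ℝ)) := by
    rw [show j+2 = (j+1)+1 by ring, poch_succ, e2]; push_cast; ring
  have e4'' : poch ((t:ℝ)+1+2) (j+2) = ((t:ℝ)+3) * poch ((t:ℝ)+2+2) (j+1) := by
    rw [show ((t:ℝ)+1+2) = ((t:ℝ)+3) by ring, poch_succ_left,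
      show ((t:ℝ)+3+1) = (t:ℝ)+2+2 by ring]
  have ht3 : ((t:ℝ)+3) ≠ 0 := by positivity
  have e4 : poch ((t:ℝ)+2+2) (j+1) = B * ((t:ℝ)+3+(j:ℝ)) * ((t:ℝ)+4+(j:ℝ)) / ((t:ℝ)+3) := by
    rw [eq_div_iff ht3, mul_comm _ ((t:ℝ)+3), ← e4'', e4']
  have e5' : poch (-((t:ℝ)+1)) (j+2) = A * ((j:ℝ)-(t:ℝ)-1) * ((j:ℝ)-(t:ℝ)) := by
    rw [show j+2 = (j+1)+1 by ring, poch_succ, e1]; push_cast; ring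
  have e5'' : poch (-((t:ℝ)+1)) (j+2) = (-((t:ℝ)+1)) * poch (-(t:ℝ)) (j+1) := by
    rw [poch_succ_left, show (-((t:ℝ)+1)+1) = -(t:ℝ) by ring]
  have ht1 : ((t:ℝ)+1) ≠ 0 := by positivity
  have e5 : poch (-(t:ℝ)) (j+1) = -(A * ((j:ℝ)-(t:ℝ)-1) * ((j:ℝ)-(t:ℝ))) / ((t:ℝ)+1) := by
    rw [eq_div_iff ht1]
    have := e5''.symm.trans e5'
    linarith [this]
  have e6 : poch ((t:ℝ)+2) (j+1) = ((t:ℝ)+2) * B := by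
    rw [poch_succ_left, show ((t:ℝ)+2+1) = (t:ℝ)+1+2 by ring]
  have e7 : poch 2 (j+1) = poch 2 j * (2+(j:ℝ)) := by rw [poch_succ]
  have e8 : poch ((N:ℝ)+1) (j+1) = poch ((N:ℝ)+1) j * ((N:ℝ)+1+(j:ℝ)) := by rw [poch_succ]
  have e9 : (((j+1).factorial : ℕ):ℝ) = ((j:ℝ)+1) * (j.factorial : ℝ) := by
    rw [Nat.factorial_succ]; push_cast; ring
  rw [e1, e2, e3, e4, e5, e6, e7, e8, e9]
  have hp : poch 2 j ≠ 0 := ne_of_gt (poch_pos (by norm_num) j)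
  have hw : poch ((N:ℝ)+1) j ≠ 0 := ne_of_gt (poch_pos (by positivity) j)
  have hf : (j.factorial : ℝ) ≠ 0 := by exact_mod_cast j.factorial_ne_zero
  have hN0 : (N:ℝ) ≠ 0 := by
    have : (2:ℝ) ≤ N := by exact_mod_cast hN
    linarith
  have hNj : (N:ℝ)+1+(j:ℝ) ≠ 0 := by positivity
  have hj2 : (2:ℝ)+(j:ℝ) ≠ 0 := by positivity
  have hj1 : ((j:ℝ)+1) ≠ 0 := by positivity
  have ht2 : ((t:ℝ)+2) ≠ 0 := by positivity
  have hd1 : (2*(2*((t:ℝ)+1)+3)) ≠ 0 := by positivity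
  have hd2 : (2*(2*((t:ℝ)+1)+1)) ≠ 0 := by positivity
  field_simp
  ring


lemma coeff_rec_zero (N t : ℕ) (hN : 2 ≤ N) :
    -((((t:ℝ)+2)^2/N)) = Ah N (t+1) * ((((t:ℝ)+3)^2/N)) + Bh N (t+1) * ((((t:ℝ)+2)^2/N))
      + Ch N (t+1) * ((((t:ℝ)+1)^2/N)) := by
  have hN0 : (N:ℝ) ≠ 0 := by
    have : (2:ℝ) ≤ N := by exact_mod_cast hN
    linarith
  simp only [Ah, Bh, Ch, if_neg (Nat.succ_ne_zero t)]
  push_cast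
  have hd1 : (2*(2*((t:ℝ)+1)+3)) ≠ 0 := by positivity
  have hd2 : (2*(2*((t:ℝ)+1)+1)) ≠ 0 := by positivity
  field_simp
  ring


lemma shmaliy_zero (n N : ℕ) : shmaliy 0 n N = 1 / N := by
  simp [shmaliy, poch_zero]

lemma shmaliy_rec (N m n : ℕ) (hN : 2 ≤ N) :
    (n:ℝ) * shmaliy m n N =
      Ah N m * shmaliy (m+1) n N + Bh N m * shmaliy m n N + Ch N m * shmaliy (m-1) n N := by
  have hN0 : (N:ℝ) ≠ 0 := by
    have : (2:ℝ) ≤ N := by exact_mod_cast hN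
    linarith
  have hN1 : (N:ℝ) + 1 ≠ 0 := by positivity
  rcases m with _ | t
  · -- m = 0
    simp only [Ch, if_pos rfl, if_true, zero_mul, add_zero, Nat.zero_sub]
    rw [shmaliy_zero, show (0:ℕ)+1 = 1 from rfl]
    have h1 : shmaliy 1 n N = (4/(N:ℝ)) * (1 - 3*((n:ℝ)+1)/(2*((N:ℝ)+1))) := by
      have hpone : ∀ a : ℝ, poch a 1 = a := fun a => by
        have := poch_succ a 0
        simpa [poch_zero] using this
      rw [shmaliy]
      rw [Finset.sum_range_succ, Finset.sum_range_succ, Finset.range_zero, Finset.sum_empty]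
      simp only [poch_zero, hpone]
      norm_num
      field_simp
      ring_nf
      tauto
    rw [h1]
    simp only [Ah, Bh, Nat.cast_zero]
    field_simp
    ring
  · -- m = t+1
    have hs1 := shmaliy_eq (t+2) n N (t+2) le_rfl
    have hs2 := shmaliy_eq (t+1) n N (t+2) (by omega)
    have hs3 := shmaliy_eq t n N (t+2) (by omega)
    set x := (n:ℝ) with hx
    set P : ℕ → ℝ := fun k => poch ((n:ℝ)+1) k with hP
    set c3 : ℝ := (((t+2:ℕ):ℝ)+1)^2/N with hc3
    set c2 : ℝ := (((t+1:ℕ):ℝ)+1)^2/N with hc2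
    set c1 : ℝ := (((t:ℕ):ℝ)+1)^2/N with hc1
    have L1 : x * shmaliy (t+1) n N
        = ∑ k ∈ Finset.range (t+3), (c2 * Dk N (t+1) k) * (x * P k) := by
      rw [hs2, ← mul_assoc, Finset.mul_sum]
      exact Finset.sum_congr rfl fun k _ => by ring
    have R1 : Ah N (t+1) * shmaliy (t+2) n N + Bh N (t+1) * shmaliy (t+1) n N
          + Ch N (t+1) * shmaliy t n N
        = ∑ k ∈ Finset.range (t+3),
            ((Ah N (t+1) * (c3 * Dk N (t+2) k) + Bh N (t+1) * (c2 * Dk N (t+1) k)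
              + Ch N (t+1) * (c1 * Dk N t k)) * P k) := by
      rw [hs1, hs2, hs3, ← mul_assoc, ← mul_assoc, ← mul_assoc, Finset.mul_sum,
        Finset.mul_sum, Finset.mul_sum, ← Finset.sum_add_distrib, ← Finset.sum_add_distrib]
      exact Finset.sum_congr rfl fun k _ => by ring
    have r1 : ∑ k ∈ Finset.range (t+3), (c2 * Dk N (t+1) k) * P (k+1)
        = ∑ k ∈ Finset.range (t+2), (c2 * Dk N (t+1) k) * P (k+1) := by
      rw [Finset.sum_range_succ, Dk_vanish N (show t+1 < t+2 by omega)]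
      simp
    have r2 : ∑ k ∈ Finset.range (t+3),
          (if k = 0 then (0:ℝ) else (c2 * Dk N (t+1) (k-1)) * P k)
        = ∑ k ∈ Finset.range (t+2), (c2 * Dk N (t+1) k) * P (k+1) := by
      rw [Finset.sum_range_succ']
      simp
    have L2 : ∑ k ∈ Finset.range (t+3), (c2 * Dk N (t+1) k) * (x * P k)
        = ∑ k ∈ Finset.range (t+3),
            ((if k = 0 then (0:ℝ) else (c2 * Dk N (t+1) (k-1)) * P k)
              - (c2 * Dk N (t+1) k) * (((k:ℝ)+1) * P k)) := by
      rw [Finset.sum_sub_distrib, r2, ← r1, ← Finset.sum_sub_distrib]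
      refine Finset.sum_congr rfl fun k _ => ?_
      have hsplit : x * P k = P (k+1) - ((k:ℝ)+1) * P k := by
        simp only [hP, hx]
        rw [poch_succ]
        ring
      rw [hsplit]
      ring
    rw [show t+1-1 = t from rfl, L1, L2, R1]
    refine Finset.sum_congr rfl fun k _ => ?_
    rcases k with _ | j
    · have h0 : P 0 = 1 := poch_zero _
      simp only [if_pos rfl, h0, Dk_zero, Nat.cast_zero]
      have := coeff_rec_zero N t hN
      simp only [hc1, hc2, hc3]
      push_cast
      push_cast at this
      linear_combination this
    · have hcr := coeff_rec N t j hN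
      simp only [if_neg (Nat.succ_ne_zero j), Nat.succ_sub_one, hc1, hc2, hc3, hP]
      push_cast
      push_cast at hcr
      linear_combination (poch ((n:ℝ)+1) (j+1)) * hcr


lemma weight_sum (N q : ℕ) (hN : 2 ≤ N) :
    ∑ n ∈ Finset.range N, (2*(n:ℝ)/((N:ℝ)*((N:ℝ)-1))) * shmaliy q n N
      = if q = 0 then 1/(N:ℝ) else 0 := by
  have hN2 : (2:ℝ) ≤ (N:ℝ) := by exact_mod_cast hN
  have hN0 : (N:ℝ) ≠ 0 := by linarith
  have hN1 : (N:ℝ) - 1 ≠ 0 := by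
    intro h
    have : (N:ℝ) = 1 := by linarith
    linarith
  rcases Nat.eq_zero_or_pos q with hq | hq
  · subst hq
    simp only [if_pos rfl]
    have hsum : ∑ n ∈ Finset.range N, (n:ℝ) = ((N:ℝ) * ((N:ℝ)-1))/2 := by
      have h := Finset.sum_range_id_mul_two N
      have h2 : ((∑ i ∈ Finset.range N, i) * 2 : ℕ) = (N * (N-1) : ℕ) := h
      have h3 : ((∑ i ∈ Finset.range N, i : ℕ) : ℝ) * 2 = (N:ℝ) * ((N:ℝ)-1) := by
        have h4 : ((N * (N-1) : ℕ) : ℝ) = (N:ℝ) * ((N:ℝ)-1) := by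
          have : (1:ℕ) ≤ N := by omega
          push_cast [Nat.cast_sub this]
          ring
        rw [← h4]
        exact_mod_cast congrArg (Nat.cast (R := ℝ)) h2
      rw [Nat.cast_sum] at h3
      linarith
    calc ∑ n ∈ Finset.range N, (2*(n:ℝ)/((N:ℝ)*((N:ℝ)-1))) * shmaliy 0 n N
        = ∑ n ∈ Finset.range N, (2/((N:ℝ)*((N:ℝ)-1)*N)) * (n:ℝ) := by
          refine Finset.sum_congr rfl fun n _ => ?_
          rw [shmaliy_zero]
          field_simp
      _ = (2/((N:ℝ)*((N:ℝ)-1)*N)) * (((N:ℝ) * ((N:ℝ)-1))/2) := by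
          rw [← Finset.mul_sum, hsum]
      _ = 1/(N:ℝ) := by field_simp
  · rw [if_neg (by omega)]
    calc ∑ n ∈ Finset.range N, (2*(n:ℝ)/((N:ℝ)*((N:ℝ)-1))) * shmaliy q n N
        = ∑ n ∈ Finset.range N, ∑ k ∈ Finset.range (q+1),
            ((2*(((q:ℝ)+1)^2)/((N:ℝ)*((N:ℝ)-1)*N)) * Dk N q k) * ((n:ℝ) * poch ((n:ℝ)+1) k) := by
          refine Finset.sum_congr rfl fun n _ => ?_
          rw [shmaliy_eq q n N q le_rfl, ← mul_assoc, Finset.mul_sum]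
          refine Finset.sum_congr rfl fun k _ => ?_
          field_simp
      _ = ∑ k ∈ Finset.range (q+1), ∑ n ∈ Finset.range N,
            ((2*(((q:ℝ)+1)^2)/((N:ℝ)*((N:ℝ)-1)*N)) * Dk N q k) * ((n:ℝ) * poch ((n:ℝ)+1) k) :=
          Finset.sum_comm
      _ = ∑ k ∈ Finset.range (q+1), (2*(((q:ℝ)+1)^2)/((N:ℝ)*((N:ℝ)-1)*N)) *
            (Dk N q k * (((k+1).factorial * (N+k).choose (k+2) : ℕ) : ℝ)) := by
          refine Finset.sum_congr rfl fun k _ => ?_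
          rw [← Finset.mul_sum, weighted_poch_sum]
          ring
      _ = 0 := by
          rw [← Finset.mul_sum, inner_sum_zero N q hN hq, mul_zero]


/-- The Gram matrix entries. -/
noncomputable def Gm (N m q : ℕ) : ℝ :=
  ∑ n ∈ Finset.range N, (2*(n:ℝ)/((N:ℝ)*((N:ℝ)-1))) * shmaliy m n N * shmaliy q n N

/-- The squared norm. -/
noncomputable def phi (N m : ℕ) : ℝ :=
  ((m:ℝ)+1) * (∏ i ∈ Finset.range m, ((N:ℝ)-2-(i:ℝ)))
    / ((N:ℝ) * ∏ i ∈ Finset.range (m+1), ((N:ℝ)+(i:ℝ)))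

noncomputable def Phi (N m q : ℕ) : ℝ := if m = q then phi N m else 0

lemma Gm_symm (N m q : ℕ) : Gm N m q = Gm N q m :=
  Finset.sum_congr rfl fun n _ => by ring

lemma Ah_ne (N m : ℕ) (hN : 2 ≤ N) : Ah N m ≠ 0 := by
  rw [Ah]
  have h1 : ((m:ℝ)+1) > 0 := by positivity
  have h2 : ((N:ℝ)+(m:ℝ)+1) > 0 := by positivity
  have h3 : (2*(2*(m:ℝ)+3)) > 0 := by positivity
  intro h
  rw [div_eq_zero_iff] at h
  rcases h with h | h
  · nlinarith
  · linarith

lemma prod_pos (N s : ℕ) (hN : 2 ≤ N) : 0 < ∏ i ∈ Finset.range s, ((N:ℝ)+(i:ℝ)) := by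
  refine Finset.prod_pos fun i _ => ?_
  have : (0:ℝ) ≤ (N:ℝ) := Nat.cast_nonneg N
  positivity

lemma AphiC (N m : ℕ) (hN : 2 ≤ N) : Ah N m * phi N (m+1) = Ch N (m+1) * phi N m := by
  have hN2 : (2:ℝ) ≤ (N:ℝ) := by exact_mod_cast hN
  have hN0 : (N:ℝ) ≠ 0 := by linarith
  simp only [phi, Ch, if_neg (Nat.succ_ne_zero m), Ah]
  rw [Finset.prod_range_succ, Finset.prod_range_succ ((fun i => ((N:ℝ)+(i:ℝ)))) (m+1)]
  have hq := prod_pos N (m+1) hN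
  have hq0 : (∏ i ∈ Finset.range (m+1), ((N:ℝ)+(i:ℝ))) ≠ 0 := ne_of_gt hq
  have hd1 : (2*(2*(m:ℝ)+3)) ≠ 0 := by positivity
  have hd2 : (2*(2*((m:ℝ)+1)+1)) ≠ 0 := by positivity
  have hNm : ((N:ℝ)+((m+1:ℕ):ℝ)) ≠ 0 := by
    push_cast
    have : (0:ℝ) ≤ (m:ℝ) := Nat.cast_nonneg m
    nlinarith
  push_cast
  field_simp
  ring

lemma Grec (N m q : ℕ) (hN : 2 ≤ N) :
    Ah N m * Gm N (m+1) q + Bh N m * Gm N m q + Ch N m * Gm N (m-1) q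
      = Ah N q * Gm N m (q+1) + Bh N q * Gm N m q + Ch N q * Gm N m (q-1) := by
  have key : ∀ a b : ℕ, Ah N a * Gm N (a+1) b + Bh N a * Gm N a b + Ch N a * Gm N (a-1) b
      = ∑ n ∈ Finset.range N,
          (2*(n:ℝ)/((N:ℝ)*((N:ℝ)-1))) * ((n:ℝ) * shmaliy a n N) * shmaliy b n N := by
    intro a b
    rw [Gm, Gm, Gm, Finset.mul_sum, Finset.mul_sum, Finset.mul_sum,
      ← Finset.sum_add_distrib, ← Finset.sum_add_distrib]
    refine Finset.sum_congr rfl fun n _ => ?_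
    rw [shmaliy_rec N a n hN]
    ring
  have k1 := key m q
  have k2 := key q m
  rw [k1, Gm_symm N m (q+1), Gm_symm N m q, Gm_symm N m (q-1), k2]
  exact Finset.sum_congr rfl fun n _ => by ring

lemma Phi_diag (N m : ℕ) : Phi N m m = phi N m := by simp [Phi]
lemma Phi_off {m q : ℕ} (N : ℕ) (h : ¬ (m = q)) : Phi N m q = 0 := by simp [Phi, h]

lemma Gram (N : ℕ) (hN : 2 ≤ N) : ∀ m q, Gm N m q = Phi N m q := by
  intro m
  induction m using Nat.strong_induction_on with
  | _ m IH =>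
    rcases m with _ | s
    · intro q
      have h0 : Gm N 0 q = (1/(N:ℝ)) * (if q = 0 then 1/(N:ℝ) else 0) := by
        rw [Gm]
        rw [show ∑ n ∈ Finset.range N, 2 * (n:ℝ) / ((N:ℝ) * ((N:ℝ) - 1)) * shmaliy 0 n N * shmaliy q n N
            = ∑ n ∈ Finset.range N, (1/(N:ℝ)) * ((2*(n:ℝ)/((N:ℝ)*((N:ℝ)-1))) * shmaliy q n N)
          from Finset.sum_congr rfl fun n _ => by rw [shmaliy_zero]; ring]
        rw [← Finset.mul_sum, weight_sum N q hN]
      rw [h0]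
      rcases eq_or_ne q 0 with h|h
      · subst h
        rw [if_pos rfl, Phi_diag, phi]
        simp
      · rw [if_neg h, mul_zero, Phi_off N (fun hh => h hh.symm)]
    · intro q
      have hA := Ah_ne N s hN
      have hrec := Grec N s q hN
      rw [IH s (by omega) q, IH (s-1) (by omega) q, IH s (by omega) (q+1),
        IH s (by omega) (q-1)] at hrec
      have key2 : Ah N s * Phi N (s+1) q
          = Ah N q * Phi N s (q+1) + Bh N q * Phi N s q + Ch N q * Phi N s (q-1)
            - Bh N s * Phi N s q - Ch N s * Phi N (s-1) q := by
        by_cases h1 : q = s+1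
        · rw [h1]
          rw [Phi_diag, Phi_off N (show ¬(s = s+1+1) by omega),
            Phi_off N (show ¬(s = s+1) by omega),
            show s+1-1 = s from rfl, Phi_diag, Phi_off N (show ¬(s-1 = s+1) by omega)]
          have h := AphiC N s hN
          linarith [h]
        · by_cases h2 : q = s
          · rw [h2]
            rw [Phi_off N (show ¬(s+1 = s) by omega), Phi_off N (show ¬(s = s+1) by omega)]
            rcases Nat.eq_zero_or_pos s with hs | hs
            · subst hs
              norm_num [Ch]
            · rw [Phi_off N (show ¬(s = s-1) by omega), Phi_off N (show ¬(s-1 = s) by omega)]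
              ring
          · by_cases h3 : s = q+1
            · rw [h3]
              rw [Phi_off N (show ¬(q+1+1 = q) by omega), Phi_diag,
                Phi_off N (show ¬(q+1 = q) by omega),
                Phi_off N (show ¬(q+1 = q-1) by omega),
                show q+1-1 = q from rfl, Phi_diag]
              have h := AphiC N q hN
              linarith [h]
            · rw [Phi_off N (show ¬(s+1 = q) by omega), Phi_off N (show ¬(s = q+1) by omega),
                Phi_off N (show ¬(s = q) by omega), Phi_off N (show ¬(s = q-1) by omega),
                Phi_off N (show ¬(s-1 = q) by omega)]
              ring
      have hGm : Ah N s * Gm N (s+1) q = Ah N s * Phi N (s+1) q := by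
        rw [key2]
        linarith [hrec]
      exact mul_left_cancel₀ hA hGm


theorem shmaliy_orthogonality (N m q : ℕ) (hN : 2 ≤ N)
    (hm : m ≤ N - 2) (hq : q ≤ N - 2) :
    ∑ n ∈ Finset.range N,
        (2 * (n : ℝ) / ((N : ℝ) * ((N : ℝ) - 1))) * shmaliy m n N * shmaliy q n N =
      (if m = q then (1 : ℝ) else 0) *
        (((m : ℝ) + 1) * Real.Gamma ((N : ℝ) - 1) * Real.Gamma (N : ℝ)) /
        (Real.Gamma ((N : ℝ) - m - 1) * (N : ℝ) * Real.Gamma ((N : ℝ) + m + 1)) := by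
  have hGm : ∑ n ∈ Finset.range N,
      (2 * (n : ℝ) / ((N : ℝ) * ((N : ℝ) - 1))) * shmaliy m n N * shmaliy q n N = Gm N m q := rfl
  rw [hGm, Gram N hN m q]
  rcases eq_or_ne m q with h | h
  · subst h
    rw [Phi_diag, if_pos rfl]
    -- Gamma conversions
    have c2 : ((N-2:ℕ):ℝ) = (N:ℝ)-2 := by
      push_cast [Nat.cast_sub (show 2 ≤ N by omega)]; ring
    have c1 : ((N-1:ℕ):ℝ) = (N:ℝ)-1 := by
      push_cast [Nat.cast_sub (show 1 ≤ N by omega)]; ring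
    have cm : ((N-m-2:ℕ):ℝ) = (N:ℝ)-(m:ℝ)-2 := by
      push_cast [Nat.cast_sub (show m+2 ≤ N by omega), show N-m-2 = N-(m+2) by omega]; ring
    have g1 : Real.Gamma ((N:ℝ)-1) = (((N-2).factorial : ℕ) : ℝ) := by
      rw [show (N:ℝ)-1 = ((N-2:ℕ):ℝ)+1 by rw [c2]; ring, Real.Gamma_nat_eq_factorial]
    have g2 : Real.Gamma ((N:ℝ)) = (((N-1).factorial : ℕ) : ℝ) := by
      rw [show (N:ℝ) = ((N-1:ℕ):ℝ)+1 by rw [c1]; ring, Real.Gamma_nat_eq_factorial]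
    have g3 : Real.Gamma ((N:ℝ)-(m:ℝ)-1) = (((N-m-2).factorial : ℕ) : ℝ) := by
      rw [show (N:ℝ)-(m:ℝ)-1 = ((N-m-2:ℕ):ℝ)+1 by rw [cm]; ring, Real.Gamma_nat_eq_factorial]
    have g4 : Real.Gamma ((N:ℝ)+(m:ℝ)+1) = (((N+m).factorial : ℕ) : ℝ) := by
      rw [show (N:ℝ)+(m:ℝ)+1 = ((N+m:ℕ):ℝ)+1 by push_cast; ring, Real.Gamma_nat_eq_factorial]
    rw [g1, g2, g3, g4, phi]
    -- products to factorial form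
    have hP1 : ∏ i ∈ Finset.range m, ((N:ℝ)-2-(i:ℝ))
        = (((N-2).descFactorial m : ℕ) : ℝ) := by
      rw [Nat.descFactorial_eq_prod_range, Nat.cast_prod]
      refine Finset.prod_congr rfl fun i hi => ?_
      simp only [Finset.mem_range] at hi
      push_cast [Nat.cast_sub (show i ≤ N-2 by omega), c2]
      ring
    have hP2 : ∀ s : ℕ, ∏ i ∈ Finset.range s, ((N:ℝ)+(i:ℝ))
        = ((N.ascFactorial s : ℕ) : ℝ) := by
      intro s
      induction s with
      | zero => simp
      | succ s ih =>
          rw [Finset.prod_range_succ, ih, Nat.ascFactorial_succ]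
          push_cast
          ring
    rw [hP1, hP2]
    have r1 : (((N-2).descFactorial m : ℕ) : ℝ) * (((N-m-2).factorial : ℕ) : ℝ)
        = (((N-2).factorial : ℕ) : ℝ) := by
      have := Nat.factorial_mul_descFactorial (show m ≤ N-2 from hm)
      rw [show N-2-m = N-m-2 by omega] at this
      rw [mul_comm]
      exact_mod_cast congrArg (Nat.cast (R := ℝ)) this
    have r2 : (((N-1).factorial : ℕ) : ℝ) * ((N.ascFactorial (m+1) : ℕ) : ℝ)
        = (((N+m).factorial : ℕ) : ℝ) := by
      have h3 := Nat.factorial_mul_ascFactorial (N-1) (m+1)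
      rw [show N-1+1 = N by omega, show N-1+(m+1) = N+m by omega] at h3
      exact_mod_cast congrArg (Nat.cast (R := ℝ)) h3
    have nz1 : (((N-m-2).factorial : ℕ) : ℝ) ≠ 0 := by exact_mod_cast (N-m-2).factorial_ne_zero
    have nz2 : (((N-1).factorial : ℕ) : ℝ) ≠ 0 := by exact_mod_cast (N-1).factorial_ne_zero
    have nz3 : (N:ℝ) ≠ 0 := by
      have : (2:ℝ) ≤ (N:ℝ) := by exact_mod_cast hN
      linarith
    have nz4 : ((N.ascFactorial (m+1) : ℕ) : ℝ) ≠ 0 := by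
      have h5 : 0 < N.ascFactorial (m+1) := by
        have := Nat.ascFactorial_pos (N-1) (m+1)
        rwa [show N-1+1 = N by omega] at this
      have h6 : N.ascFactorial (m+1) ≠ 0 := by omega
      exact_mod_cast h6
    rw [← r1, ← r2]
    field_simp
  · rw [Phi_off N h, if_neg h]
    simp
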